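/- Let C = {x ∈ ℝ^4 : x_2 > x_3 > x_4 > 0, x_1 > x_2 + x_3 + x_4, and x_1 + x_2 < 1} and C_s = {x ∈ ℝ^4 : x_2 > x_3 > x_4 > 0, x_1 > x_2 + x_3 + x_4, and x_1 < 1}. Then the Lebesgue volume of C_s equals 4 times the Lebesgue volume of C. -/

import Mathlib

open MeasureTheory

/-- For the affine Weyl group of type `F_4`, the volume of the simplex `C_s` (cut out by the
short dominant root `θ_s = e₁`) is `4` times the volume of the fundamental alcove `C`
(cut out by the highest root `θ = e₁ + e₂`). -/
theorem volume_Cs_eq_F4 :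
    volume {x : Fin 4 → ℝ | x 2 < x 1 ∧ x 3 < x 2 ∧ 0 < x 3 ∧ x 1 + x 2 + x 3 < x 0 ∧
        x 0 < 1}
      = 4 *
        volume {x : Fin 4 → ℝ | x 2 < x 1 ∧ x 3 < x 2 ∧ 0 < x 3 ∧ x 1 + x 2 + x 3 < x 0 ∧
          x 0 + x 1 < 1} := by
  set M : Matrix (Fin 4) (Fin 4) ℝ :=
    !![1, 1, 0, 0; 0, 2, -1/2, -1/6; 0, 0, 3/2, -1/6; 0, 0, 0, 4/3] with hM
  set f : (Fin 4 → ℝ) →ₗ[ℝ] (Fin 4 → ℝ) := Matrix.toLin' M with hf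
  have key : ∀ x : Fin 4 → ℝ,
      f x = ![x 0 + x 1, 2*x 1 - x 2/2 - x 3/6, 3/2*x 2 - x 3/6, 4/3*x 3] := by
    intro x
    funext i
    fin_cases i <;>
      simp [hf, hM, Matrix.toLin'_apply, Matrix.mulVec, dotProduct, Fin.sum_univ_four] <;>
      ring
  have hdet : LinearMap.det f = 4 := by
    rw [hf, LinearMap.det_toLin', hM]
    rw [Matrix.det_succ_column_zero]
    simp [Fin.sum_univ_four, Matrix.det_fin_three, Fin.succAbove]
    norm_num
  have hdet0 : LinearMap.det f ≠ 0 := by rw [hdet]; norm_num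
  set Cs : Set (Fin 4 → ℝ) := {x : Fin 4 → ℝ | x 2 < x 1 ∧ x 3 < x 2 ∧ 0 < x 3 ∧
      x 1 + x 2 + x 3 < x 0 ∧ x 0 < 1} with hCs
  have hset : f ⁻¹' Cs = {x : Fin 4 → ℝ | x 2 < x 1 ∧ x 3 < x 2 ∧ 0 < x 3 ∧
      x 1 + x 2 + x 3 < x 0 ∧ x 0 + x 1 < 1} := by
    ext x
    simp only [Set.mem_preimage, Set.mem_setOf_eq, hCs, key x, Matrix.cons_val_zero,
      Matrix.cons_val_one, Matrix.head_cons, Matrix.cons_val_two, Matrix.tail_cons,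
      Matrix.cons_val_three]
    constructor <;> rintro ⟨h1, h2, h3, h4, h5⟩ <;>
      exact ⟨by linarith, by linarith, by linarith, by linarith, by linarith⟩
  have h := MeasureTheory.Measure.addHaar_preimage_linearMap (volume : Measure (Fin 4 → ℝ))
    hdet0 Cs
  rw [hset] at h
  rw [h, hdet, ← mul_assoc]
  have h4 : (4 : ENNReal) * ENNReal.ofReal |(4 : ℝ)⁻¹| = 1 := by
    rw [abs_of_pos (by norm_num : (0:ℝ) < (4:ℝ)⁻¹),
      ENNReal.ofReal_inv_of_pos (by norm_num : (0:ℝ) < 4)]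
    rw [show ENNReal.ofReal (4:ℝ) = (4 : ENNReal) by norm_num]
    exact ENNReal.mul_inv_cancel (by norm_num) (by norm_num)
  rw [h4, one_mul]
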